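/- Assume p_{0,2} < κ < p_{0,1} and u_{0,2} < u_{0,1} satisfy (p_{0,1} − p_{0,2})(𝒯^i(p_{0,2}) − 1) = (u_{0,1} − u_{0,2})², and set λ̄₂ = −(u_{0,2} − u_{0,1})/(𝒯^i(p_{0,2}) − 1). For ε > 0 let p_{0,2}^ε < κ with p_{0,2}^ε → p_{0,2} as ε → 0, and define u_{0,2}^ε := u_{0,1} − √((𝒯_ε(p_{0,2}^ε) − 𝒯_ε(p_{0,1}))(p_{0,1} − p_{0,2}^ε)) and λ̄₂^ε := −(u_{0,2}^ε − u_{0,1})/(𝒯_ε(p_{0,2}^ε) − 𝒯_ε(p_{0,1})). Then: (a) the piecewise constant function equal to (p_{0,1}, u_{0,1}) for x < λ̄₂^ε t and to (p_{0,2}^ε, u_{0,2}^ε) for x > λ̄₂^ε t is a weak distributional solution of the ε-soft-congestion p-system (the two integral identities hold for every φ ∈ C¹_c((0,∞)×ℝ)); (b) u_{0,2}^ε → u_{0,2} and λ̄₂^ε → λ̄₂ as ε → 0. -/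

import Mathlib

open Set Filter MeasureTheory Topology

/-- The singular pressure law `𝒫_ε(τ) = κ τ^{-γᵢ} + ε (τ-1)^{-γ_c}`. -/
noncomputable def Pe (κ γi γc ε τ : ℝ) : ℝ := κ * τ ^ (-γi) + ε * (τ - 1) ^ (-γc)


private lemma cont_shear_fderiv (φ : ℝ × ℝ → ℝ) (hφ : ContDiff ℝ 1 φ) (lam : ℝ) (v : ℝ × ℝ) :
    Continuous fun q : ℝ × ℝ => fderiv ℝ φ (q.1, q.2 + lam * q.1) v := by
  have h1 : Continuous fun q : ℝ × ℝ => (q.1, q.2 + lam * q.1) := by fun_prop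
  exact ((hφ.continuous_fderiv one_ne_zero).comp h1).clm_apply continuous_const

private lemma hcs_shear_fderiv (φ : ℝ × ℝ → ℝ) (hs : HasCompactSupport φ) (lam : ℝ) (v : ℝ × ℝ) :
    HasCompactSupport fun q : ℝ × ℝ => fderiv ℝ φ (q.1, q.2 + lam * q.1) v := by
  apply HasCompactSupport.intro
    (IsCompact.image (hs.fderiv ℝ) (show Continuous fun q : ℝ × ℝ => (q.1, q.2 - lam * q.1) by fun_prop))
  intro q hq
  have hns : (q.1, q.2 + lam * q.1) ∉ tsupport (fderiv ℝ φ) := by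
    intro hmem
    exact hq ⟨_, hmem, by simp⟩
  rw [image_eq_zero_of_notMem_tsupport hns]
  rfl

private lemma line_t (φ : ℝ × ℝ → ℝ) (hφ : ContDiff ℝ 1 φ) (hs : HasCompactSupport φ)
    (lam y : ℝ) : ∫ t : ℝ, fderiv ℝ φ (t, y + lam * t) (1, lam) = 0 := by
  have hder : ∀ t : ℝ, HasDerivAt (fun t => φ (t, y + lam * t))
      (fderiv ℝ φ (t, y + lam * t) (1, lam)) t := by
    intro t
    have h2 : HasDerivAt (fun t : ℝ => ((t : ℝ), y + lam * t)) ((1 : ℝ), lam) t := by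
      refine (hasDerivAt_id t).prodMk ?_
      simpa using ((hasDerivAt_id t).const_mul lam).const_add y
    exact ((hφ.differentiable one_ne_zero _).hasFDerivAt).comp_hasDerivAt t h2
  have hc1 : Continuous fun t : ℝ => φ (t, y + lam * t) := hφ.continuous.comp (by fun_prop)
  have hc2 : Continuous fun t : ℝ => fderiv ℝ φ (t, y + lam * t) (1, lam) :=
    (cont_shear_fderiv φ hφ lam (1, lam)).comp (continuous_id.prodMk continuous_const)
  have hcs1 : HasCompactSupport fun t : ℝ => φ (t, y + lam * t) := by
    apply HasCompactSupport.intro (IsCompact.image hs continuous_fst)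
    intro t ht
    by_contra h
    exact ht ⟨(t, y + lam * t), subset_tsupport _ h, rfl⟩
  have hcs2 : HasCompactSupport fun t : ℝ => fderiv ℝ φ (t, y + lam * t) (1, lam) := by
    apply HasCompactSupport.intro (IsCompact.image (hcs_shear_fderiv φ hs lam (1, lam)) continuous_fst)
    intro t ht
    by_contra h
    exact ht ⟨(t, y), subset_tsupport _ h, rfl⟩
  exact integral_eq_zero_of_hasDerivAt_of_integrable hder
    (hc2.integrable_of_hasCompactSupport hcs2) (hc1.integrable_of_hasCompactSupport hcs1)

private lemma line_x (φ : ℝ × ℝ → ℝ) (hφ : ContDiff ℝ 1 φ) (hs : HasCompactSupport φ)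
    (t : ℝ) : ∫ x : ℝ, fderiv ℝ φ (t, x) (0, 1) = 0 := by
  have hder : ∀ x : ℝ, HasDerivAt (fun x => φ (t, x))
      (fderiv ℝ φ (t, x) (0, 1)) x := by
    intro x
    have h2 : HasDerivAt (fun x : ℝ => ((t : ℝ), x)) ((0 : ℝ), (1 : ℝ)) x :=
      (hasDerivAt_const x t).prodMk (hasDerivAt_id x)
    exact ((hφ.differentiable one_ne_zero _).hasFDerivAt).comp_hasDerivAt x h2
  have hc1 : Continuous fun x : ℝ => φ (t, x) := hφ.continuous.comp (by fun_prop)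
  have hc2 : Continuous fun x : ℝ => fderiv ℝ φ (t, x) (0, 1) :=
    ((hφ.continuous_fderiv one_ne_zero).comp (by fun_prop : Continuous fun x : ℝ => ((t:ℝ), x))).clm_apply
      continuous_const
  have hcs1 : HasCompactSupport fun x : ℝ => φ (t, x) := by
    apply HasCompactSupport.intro (IsCompact.image hs continuous_snd)
    intro x hx
    by_contra h
    exact hx ⟨(t, x), subset_tsupport _ h, rfl⟩
  have hcs2 : HasCompactSupport fun x : ℝ => fderiv ℝ φ (t, x) (0, 1) := by
    apply HasCompactSupport.intro (IsCompact.image (hs.fderiv_apply ℝ (0,1)) continuous_snd)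
    intro x hx
    by_contra h
    refine hx ⟨(t, x), subset_tsupport _ ?_, rfl⟩
    exact h
  exact integral_eq_zero_of_hasDerivAt_of_integrable hder
    (hc2.integrable_of_hasCompactSupport hcs2) (hc1.integrable_of_hasCompactSupport hcs1)

private lemma shock_weak (lam a b c d : ℝ) (hRH : c - lam * a = d - lam * b)
    (φ : ℝ × ℝ → ℝ) (hφ : ContDiff ℝ 1 φ) (hs : HasCompactSupport φ) :
    ∫ q : ℝ × ℝ, ((if q.2 < lam * q.1 then a else b) * fderiv ℝ φ q (1, 0)
      + (if q.2 < lam * q.1 then c else d) * fderiv ℝ φ q (0, 1)) = 0 := by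
  -- continuous, compactly supported building blocks
  have hΓcont : Continuous fun q : ℝ × ℝ => fderiv ℝ φ q (1, lam) :=
    (hφ.continuous_fderiv one_ne_zero).clm_apply continuous_const
  have hΓint : Integrable (fun q : ℝ × ℝ => fderiv ℝ φ q (1, lam)) :=
    hΓcont.integrable_of_hasCompactSupport (hs.fderiv_apply ℝ _)
  have hD2cont : Continuous fun q : ℝ × ℝ => fderiv ℝ φ q (0, 1) :=
    (hφ.continuous_fderiv one_ne_zero).clm_apply continuous_const
  have hD2int : Integrable (fun q : ℝ × ℝ => fderiv ℝ φ q (0, 1)) :=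
    hD2cont.integrable_of_hasCompactSupport (hs.fderiv_apply ℝ _)
  have hmeasS : MeasurableSet {q : ℝ × ℝ | q.2 < lam * q.1} :=
    measurableSet_lt measurable_snd (measurable_fst.const_mul lam)
  have hifm : ∀ u v : ℝ, AEStronglyMeasurable
      (fun q : ℝ × ℝ => if q.2 < lam * q.1 then u else v) volume :=
    fun u v => (Measurable.ite hmeasS measurable_const measurable_const).aestronglyMeasurable
  have hbd : ∀ (u v : ℝ) (q : ℝ × ℝ), ‖if q.2 < lam * q.1 then u else v‖ ≤ max ‖u‖ ‖v‖ := by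
    intro u v q
    split_ifs
    · exact le_max_left _ _
    · exact le_max_right _ _
  have hG1 : Integrable (fun q : ℝ × ℝ =>
      (if q.2 < lam * q.1 then a else b) * fderiv ℝ φ q (1, lam)) :=
    hΓint.bdd_mul (hifm a b) (Filter.Eventually.of_forall (hbd a b))
  -- pointwise rewriting of the integrand
  have hpt : ∀ q : ℝ × ℝ,
      (if q.2 < lam * q.1 then a else b) * fderiv ℝ φ q (1, 0)
        + (if q.2 < lam * q.1 then c else d) * fderiv ℝ φ q (0, 1)
      = (if q.2 < lam * q.1 then a else b) * fderiv ℝ φ q (1, lam)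
        + (c - lam * a) * fderiv ℝ φ q (0, 1) := by
    intro q
    have hvec : ((1 : ℝ), (0 : ℝ)) = ((1 : ℝ), lam) - lam • ((0 : ℝ), (1 : ℝ)) := by
      simp [Prod.ext_iff]
    have hdir : fderiv ℝ φ q (1, (0 : ℝ))
        = fderiv ℝ φ q (1, lam) - lam * fderiv ℝ φ q (0, 1) := by
      rw [hvec, map_sub, ContinuousLinearMap.map_smul]
      rfl
    by_cases h : q.2 < lam * q.1
    · simp only [if_pos h, hdir]; ring
    · simp only [if_neg h, hdir]
      linear_combination (fderiv ℝ φ q (0, 1)) * hRH.symm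
  rw [integral_congr_ae (g := fun q : ℝ × ℝ =>
      (if q.2 < lam * q.1 then a else b) * fderiv ℝ φ q (1, lam)
        + (c - lam * a) * fderiv ℝ φ q (0, 1)) (Filter.Eventually.of_forall hpt)]
  rw [integral_add hG1 (hD2int.const_mul (c - lam * a))]
  have hz2 : ∫ q : ℝ × ℝ, (c - lam * a) * fderiv ℝ φ q (0, 1) = 0 := by
    rw [integral_const_mul]
    have : ∫ q : ℝ × ℝ, fderiv ℝ φ q (0, 1) = 0 := by
      rw [Measure.volume_eq_prod] at hD2int ⊢
      rw [integral_prod _ hD2int]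
      simp [line_x φ hφ hs]
    rw [this, mul_zero]
  have hz1 : ∫ q : ℝ × ℝ, (if q.2 < lam * q.1 then a else b) * fderiv ℝ φ q (1, lam) = 0 := by
    rw [Measure.volume_eq_prod] at hG1 ⊢
    rw [integral_prod _ hG1]
    have hinner : ∀ t : ℝ, (∫ x : ℝ, (if x < lam * t then a else b) * fderiv ℝ φ (t, x) (1, lam))
        = ∫ y : ℝ, (if y < 0 then a else b) * fderiv ℝ φ (t, y + lam * t) (1, lam) := by
      intro t
      rw [← integral_add_right_eq_self
        (fun x : ℝ => (if x < lam * t then a else b) * fderiv ℝ φ (t, x) (1, lam)) (lam * t)]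
      congr 1
      funext y
      congr 1
      simp [add_lt_iff_neg_left]
    simp only [hinner]
    -- swap the order of integration
    have hGint : Integrable (Function.uncurry fun t y : ℝ =>
        (if y < 0 then a else b) * fderiv ℝ φ (t, y + lam * t) (1, lam))
        (volume.prod volume) := by
      rw [← Measure.volume_eq_prod]
      have hcont := cont_shear_fderiv φ hφ lam (1, lam)
      have hint : Integrable (fun q : ℝ × ℝ => fderiv ℝ φ (q.1, q.2 + lam * q.1) (1, lam)) :=
        hcont.integrable_of_hasCompactSupport (hcs_shear_fderiv φ hs lam (1, lam))
      have hm : AEStronglyMeasurable (fun q : ℝ × ℝ => if q.2 < 0 then a else b)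
          (volume : Measure (ℝ × ℝ)) :=
        (Measurable.ite (measurableSet_lt measurable_snd measurable_const)
          measurable_const measurable_const).aestronglyMeasurable
      have := hint.bdd_mul hm (c := max ‖a‖ ‖b‖) (Filter.Eventually.of_forall fun q => by
        split_ifs
        · exact le_max_left _ _
        · exact le_max_right _ _)
      exact this
    rw [integral_integral_swap hGint]
    have : ∀ y : ℝ, (∫ t : ℝ, (if y < 0 then a else b) * fderiv ℝ φ (t, y + lam * t) (1, lam))
        = 0 := by
      intro y
      rw [integral_const_mul, line_t φ hφ hs lam y, mul_zero]
    simp only [this, integral_zero]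
  rw [hz1, hz2, add_zero]

/-- The `ε`-approximate reference 2-shock interface: (a) for each `ε > 0` the piecewise
constant function equal to `(p₀₁,u₀₁)` for `x < λ̄₂^ε t` and to `(p₀₂^ε,u₀₂^ε)` for
`x > λ̄₂^ε t` is a weak distributional solution of the soft-congestion p-system
`∂ₜ 𝒯_ε(p) − ∂ₓ u = 0`, `∂ₜ u + ∂ₓ p = 0`; (b) `u₀₂^ε → u₀₂` and `λ̄₂^ε → λ̄₂`
as `ε → 0`. -/
theorem stmt11 (κ γi γc p01 p02 u01 u02 : ℝ)
    (hκ : 0 < κ) (hγi : 1 < γi) (hγc : 1 < γc)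
    (hp02 : 0 < p02) (h1 : p02 < κ) (h2 : κ < p01) (hu : u02 < u01)
    (hRH : (p01 - p02) * ((κ / p02) ^ (1 / γi) - 1) = (u01 - u02) ^ 2)
    (lam2 : ℝ) (hlam2 : lam2 = -(u02 - u01) / ((κ / p02) ^ (1 / γi) - 1))
    (T : ℝ → ℝ → ℝ)
    (hT : ∀ ε > (0:ℝ), ∀ p > (0:ℝ), 1 < T ε p ∧ Pe κ γi γc ε (T ε p) = p)
    (p02e u02e lam2e : ℝ → ℝ)
    (hp02e : ∀ ε > (0:ℝ), 0 < p02e ε ∧ p02e ε < κ)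
    (hp02conv : Tendsto p02e (nhdsWithin 0 (Ioi 0)) (nhds p02))
    (hu02e : ∀ ε > (0:ℝ),
      u02e ε = u01 - Real.sqrt ((T ε (p02e ε) - T ε p01) * (p01 - p02e ε)))
    (hlam2e : ∀ ε > (0:ℝ),
      lam2e ε = -(u02e ε - u01) / (T ε (p02e ε) - T ε p01)) :
    (∀ ε > (0:ℝ), ∀ φ : ℝ × ℝ → ℝ, ContDiff ℝ 1 φ → HasCompactSupport φ →
      tsupport φ ⊆ (Ioi (0:ℝ)) ×ˢ (univ : Set ℝ) →
      (∫ q : ℝ × ℝ,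
        (T ε (if q.2 < lam2e ε * q.1 then p01 else p02e ε) * fderiv ℝ φ q (1, 0)
          - (if q.2 < lam2e ε * q.1 then u01 else u02e ε) * fderiv ℝ φ q (0, 1))) = 0 ∧
      (∫ q : ℝ × ℝ,
        ((if q.2 < lam2e ε * q.1 then u01 else u02e ε) * fderiv ℝ φ q (1, 0)
          + (if q.2 < lam2e ε * q.1 then p01 else p02e ε) * fderiv ℝ φ q (0, 1))) = 0) ∧
    Tendsto u02e (nhdsWithin 0 (Ioi 0)) (nhds u02) ∧
    Tendsto lam2e (nhdsWithin 0 (Ioi 0)) (nhds lam2) := by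
  constructor
  · intro ε hε φ hφ hφc hφsupp
    have hp01 : (0:ℝ) < p01 := hκ.trans h2
    obtain ⟨hp2pos, hp2ltκ⟩ := hp02e ε hε
    obtain ⟨hTL1, hPeL⟩ := hT ε hε p01 hp01
    obtain ⟨hTR1, hPeR⟩ := hT ε hε (p02e ε) hp2pos
    have hTRgtTL : T ε p01 < T ε (p02e ε) := by
      by_contra hle
      push_neg at hle
      have hmono : Pe κ γi γc ε (T ε p01) ≤ Pe κ γi γc ε (T ε (p02e ε)) := by
        rcases eq_or_lt_of_le hle with h | h
        · rw [h]
        · unfold Pe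
          have e1 : T ε p01 ^ (-γi) < T ε (p02e ε) ^ (-γi) :=
            Real.rpow_lt_rpow_of_neg (by linarith) h (by linarith)
          have e2 : (T ε p01 - 1) ^ (-γc) < (T ε (p02e ε) - 1) ^ (-γc) :=
            Real.rpow_lt_rpow_of_neg (by linarith) (by linarith) (by linarith)
          have e1' := mul_lt_mul_of_pos_left e1 hκ
          have e2' := mul_lt_mul_of_pos_left e2 hε
          linarith
      rw [hPeL, hPeR] at hmono
      linarith
    have hD0 : T ε (p02e ε) - T ε p01 ≠ 0 := sub_ne_zero.mpr (ne_of_gt hTRgtTL)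
    have hDP : 0 ≤ (T ε (p02e ε) - T ε p01) * (p01 - p02e ε) :=
      mul_nonneg (by linarith) (by linarith)
    have hS : u01 - u02e ε = Real.sqrt ((T ε (p02e ε) - T ε p01) * (p01 - p02e ε)) := by
      rw [hu02e ε hε]; ring
    have hSsq : (u01 - u02e ε) ^ 2 = (T ε (p02e ε) - T ε p01) * (p01 - p02e ε) := by
      rw [hS, Real.sq_sqrt hDP]
    have hlam : lam2e ε * (T ε (p02e ε) - T ε p01) = u01 - u02e ε := by
      rw [hlam2e ε hε, div_mul_cancel₀ _ hD0]; ring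
    have hK1 : (-u01) - lam2e ε * T ε p01 = (-(u02e ε)) - lam2e ε * T ε (p02e ε) := by
      linear_combination hlam
    have hK2 : p01 - lam2e ε * u01 = p02e ε - lam2e ε * u02e ε := by
      have h' : lam2e ε * (u01 - u02e ε) = p01 - p02e ε := by
        rw [hlam2e ε hε, div_mul_eq_mul_div, div_eq_iff hD0]
        linear_combination hSsq
      linear_combination -h'
    constructor
    · have hw := shock_weak (lam2e ε) (T ε p01) (T ε (p02e ε)) (-u01) (-(u02e ε)) hK1 φ hφ hφc
      rw [MeasureTheory.integral_congr_ae (g := fun q : ℝ × ℝ =>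
          (if q.2 < lam2e ε * q.1 then T ε p01 else T ε (p02e ε)) * fderiv ℝ φ q (1, 0)
            + (if q.2 < lam2e ε * q.1 then -u01 else -(u02e ε)) * fderiv ℝ φ q (0, 1))
          (Filter.Eventually.of_forall fun q => by
            by_cases h : q.2 < lam2e ε * q.1 <;> simp [h] <;> ring)]
      exact hw
    · exact shock_weak (lam2e ε) u01 (u02e ε) p01 (p02e ε) hK2 φ hφ hφc
  have hγi0 : (0:ℝ) < γi := by linarith
  have hγc0 : (0:ℝ) < γc := by linarith
  have hp01 : (0:ℝ) < p01 := hκ.trans h2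
  set l : Filter ℝ := nhdsWithin 0 (Ioi 0) with hl
  have hev : ∀ᶠ ε in l, 0 < ε := eventually_mem_nhdsWithin
  set τ₀ : ℝ := (κ / p02) ^ (1 / γi) with hτ₀def
  have hτ₀ : 1 < τ₀ := by
    rw [hτ₀def, Real.one_lt_rpow_iff_of_pos (by positivity)]
    exact Or.inl ⟨(one_lt_div hp02).2 h1, by positivity⟩
  -- Step 1 : T ε p01 → 1
  have hbound1 : ∀ᶠ ε in l, 1 < T ε p01 ∧ T ε p01 ≤ 1 + ((p01 - κ)/ε) ^ (-(1/γc)) := by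
    filter_upwards [hev] with ε hε
    obtain ⟨hτ, hPe⟩ := hT ε hε p01 hp01
    refine ⟨hτ, ?_⟩
    have hle1 : T ε p01 ^ (-γi) ≤ 1 := Real.rpow_le_one_of_one_le_of_nonpos hτ.le (by linarith)
    have h1' : κ * T ε p01 ^ (-γi) ≤ κ := mul_le_of_le_one_right hκ.le hle1
    have hM : 0 < (p01 - κ)/ε := div_pos (by linarith) hε
    have hkey : (p01 - κ)/ε ≤ (T ε p01 - 1) ^ (-γc) := by
      rw [div_le_iff₀ hε]
      unfold Pe at hPe
      nlinarith
    have hid : (((p01 - κ)/ε) ^ (-(1/γc))) ^ (-γc) = (p01 - κ)/ε := by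
      rw [← Real.rpow_mul hM.le, show (-(1/γc)) * (-γc) = 1 by field_simp, Real.rpow_one]
    have hfin := (Real.rpow_le_rpow_iff_of_neg (Real.rpow_pos_of_pos hM _)
      (by linarith : (0:ℝ) < T ε p01 - 1) (by linarith : -γc < 0)).mp (by rw [hid]; exact hkey)
    linarith
  have hB : Tendsto (fun ε => ((p01 - κ)/ε) ^ (-(1/γc))) l (nhds 0) := by
    apply (tendsto_rpow_neg_atTop (by positivity : (0:ℝ) < 1/γc)).comp
    have h3 : Tendsto (fun ε : ℝ => (p01 - κ) * ε⁻¹) l atTop :=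
      Tendsto.const_mul_atTop (by linarith) tendsto_inv_nhdsGT_zero
    exact h3.congr (fun ε => (div_eq_mul_inv _ _).symm)
  have hT1 : Tendsto (fun ε => T ε p01) l (nhds 1) := by
    apply tendsto_of_tendsto_of_tendsto_of_le_of_le' tendsto_const_nhds
        (show Tendsto (fun ε => 1 + ((p01 - κ)/ε) ^ (-(1/γc))) l (nhds 1) by
          simpa using tendsto_const_nhds.add hB)
    · filter_upwards [hbound1] with ε h using h.1.le
    · filter_upwards [hbound1] with ε h using h.2
  -- Step 2 : T ε (p02e ε) → τ₀
  have hple : ∀ᶠ ε in l, 0 < p02e ε ∧ p02e ε < κ := by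
    filter_upwards [hev] with ε hε using hp02e ε hε
  have hLb : Tendsto (fun ε => (κ / p02e ε) ^ (1/γi)) l (nhds τ₀) := by
    have hc : ContinuousAt (fun p : ℝ => (κ / p) ^ (1/γi)) p02 :=
      ContinuousAt.comp (Real.continuousAt_rpow_const _ _ (Or.inl (by positivity)))
        (ContinuousAt.div continuousAt_const continuousAt_id hp02.ne')
    exact hc.tendsto.comp hp02conv
  have hlow : ∀ᶠ ε in l, (κ / p02e ε) ^ (1/γi) < T ε (p02e ε) := by
    filter_upwards [hev, hple] with ε hε hp
    obtain ⟨hτ, hPe⟩ := hT ε hε (p02e ε) hp.1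
    have hτ0 : (0:ℝ) < T ε (p02e ε) := by linarith
    have hlt : T ε (p02e ε) ^ (-γi) < p02e ε / κ := by
      rw [lt_div_iff₀ hκ]
      unfold Pe at hPe
      nlinarith [Real.rpow_pos_of_pos (show (0:ℝ) < T ε (p02e ε) - 1 by linarith) (-γc),
        mul_pos hε (Real.rpow_pos_of_pos (show (0:ℝ) < T ε (p02e ε) - 1 by linarith) (-γc))]
    have h2' := Real.rpow_lt_rpow_of_neg (Real.rpow_pos_of_pos hτ0 (-γi)) hlt
      (show -(1/γi) < 0 by rw [neg_lt, neg_zero]; positivity)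
    have hid : (T ε (p02e ε) ^ (-γi)) ^ (-(1/γi)) = T ε (p02e ε) := by
      rw [← Real.rpow_mul hτ0.le, show (-γi) * (-(1/γi)) = 1 by field_simp, Real.rpow_one]
    have hid2 : (p02e ε / κ) ^ (-(1/γi)) = (κ / p02e ε) ^ (1/γi) := by
      rw [Real.rpow_neg (div_nonneg hp.1.le hκ.le), ← Real.inv_rpow (div_nonneg hp.1.le hκ.le), inv_div]
    rw [hid, hid2] at h2'
    exact h2'
  have hm1 : 1 < (1 + τ₀)/2 := by linarith
  have hmτ : (1 + τ₀)/2 < τ₀ := by linarith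
  have hgm : ∀ᶠ ε in l, (1 + τ₀)/2 ≤ T ε (p02e ε) := by
    filter_upwards [hlow, hLb.eventually (eventually_gt_nhds hmτ)] with ε ha hb
    linarith
  have hz : Tendsto (fun ε => ε * (T ε (p02e ε) - 1) ^ (-γc)) l (nhds 0) := by
    have hconst : Tendsto (fun ε : ℝ => ε * ((1 + τ₀)/2 - 1) ^ (-γc)) l (nhds 0) := by
      have hid' : Tendsto (fun ε : ℝ => ε) l (nhds 0) :=
        Filter.tendsto_id.mono_right nhdsWithin_le_nhds
      simpa using hid'.mul_const (((1 + τ₀)/2 - 1) ^ (-γc))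
    apply tendsto_of_tendsto_of_tendsto_of_le_of_le' tendsto_const_nhds hconst
    · filter_upwards [hev, hgm] with ε hε hg
      exact mul_nonneg hε.le (Real.rpow_nonneg (by linarith) _)
    · filter_upwards [hev, hgm] with ε hε hg
      have hle : (T ε (p02e ε) - 1) ^ (-γc) ≤ ((1 + τ₀)/2 - 1) ^ (-γc) := by
        rw [Real.rpow_le_rpow_iff_of_neg (by linarith) (by linarith) (by linarith)]
        linarith
      exact mul_le_mul_of_nonneg_left hle hε.le
  have hpow : Tendsto (fun ε => T ε (p02e ε) ^ (-γi)) l (nhds (p02 / κ)) := by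
    have h4 : Tendsto (fun ε => (p02e ε - ε * (T ε (p02e ε) - 1) ^ (-γc)) / κ) l
        (nhds ((p02 - 0)/κ)) := (hp02conv.sub hz).div_const κ
    rw [sub_zero] at h4
    apply h4.congr'
    filter_upwards [hev, hple] with ε hε hp
    obtain ⟨hτ, hPe⟩ := hT ε hε (p02e ε) hp.1
    unfold Pe at hPe
    field_simp
    linarith
  have hT2 : Tendsto (fun ε => T ε (p02e ε)) l (nhds τ₀) := by
    have hcont : ContinuousAt (fun x : ℝ => x ^ (-(1/γi))) (p02/κ) :=
      Real.continuousAt_rpow_const _ _ (Or.inl (by positivity))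
    have h3 := hcont.tendsto.comp hpow
    have hval : (p02/κ) ^ (-(1/γi)) = τ₀ := by
      rw [Real.rpow_neg (by positivity), ← Real.inv_rpow (by positivity), inv_div, hτ₀def]
    rw [hval] at h3
    apply h3.congr'
    filter_upwards [hev] with ε hε
    obtain ⟨hτ, _⟩ := hT ε hε (p02e ε) (hp02e ε hε).1
    show (T ε (p02e ε) ^ (-γi)) ^ (-(1/γi)) = T ε (p02e ε)
    rw [← Real.rpow_mul (by linarith), show (-γi) * (-(1/γi)) = 1 by field_simp, Real.rpow_one]
  -- Step 3 : conclusion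
  have hsq : Real.sqrt ((τ₀ - 1) * (p01 - p02)) = u01 - u02 := by
    rw [show (τ₀ - 1) * (p01 - p02) = (u01 - u02)^2 by linear_combination hRH]
    exact Real.sqrt_sq (by linarith)
  have hu02conv : Tendsto u02e l (nhds u02) := by
    have hlim : Tendsto (fun ε => u01 - Real.sqrt ((T ε (p02e ε) - T ε p01) * (p01 - p02e ε))) l
        (nhds (u01 - Real.sqrt ((τ₀ - 1) * (p01 - p02)))) :=
      tendsto_const_nhds.sub ((Real.continuous_sqrt.tendsto _).comp
        ((hT2.sub hT1).mul (tendsto_const_nhds.sub hp02conv)))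
    rw [show u01 - Real.sqrt ((τ₀ - 1) * (p01 - p02)) = u02 by rw [hsq]; ring] at hlim
    apply hlim.congr'
    filter_upwards [hev] with ε hε
    exact (hu02e ε hε).symm
  refine ⟨hu02conv, ?_⟩
  have hlim : Tendsto (fun ε => -(u02e ε - u01) / (T ε (p02e ε) - T ε p01)) l
      (nhds (-(u02 - u01) / (τ₀ - 1))) :=
    Tendsto.div ((hu02conv.sub tendsto_const_nhds).neg) (hT2.sub hT1) (sub_ne_zero.mpr (ne_of_gt hτ₀))
  rw [hlam2]
  apply hlim.congr'
  filter_upwards [hev] with ε hε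
  exact (hlam2e ε hε).symm
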